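/- Suppose x⁺ ∈ E is an ε-inexact proximal-gradient step from the point x ∈ E (i.e., with w̄ = x) with step size β > 0, and suppose β satisfies the majorization condition at (x⁺, x). Then f(x⁺) ≤ f(x) − (1/(2β)) · (‖x⁺ − x‖² − ε²); in particular, if ε² ≤ ‖x⁺ − x‖², then f(x⁺) ≤ f(x). -/

import Mathlib

open RealInnerProductSpace

/-- If `x⁺` is an `ε`-inexact proximal-gradient step from `x`
with step size `β > 0` satisfying the majorization condition at `(x⁺, x)`, then
`f x⁺ ≤ f x − (1/(2β))(‖x⁺ − x‖² − ε²)`; in particular if `ε² ≤ ‖x⁺ − x‖²` then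
`f x⁺ ≤ f x`. -/
theorem pnpg_monotonic {E : Type*} [NormedAddCommGroup E] [InnerProductSpace ℝ E]
    [FiniteDimensional ℝ E]
    (L R f : E → ℝ) (gradL : E → E)
    (hLconv : ConvexOn ℝ Set.univ L)
    (hLgrad : ∀ x, HasGradientAt L (gradL x) x)
    (hRconv : ConvexOn ℝ Set.univ R)
    (hf : ∀ x, f x = L x + R x)
    (x xplus : E) (β ε : ℝ) (hβ : 0 < β) (hε : 0 ≤ ε)
    (hprox : ∀ z, R z ≥ R xplus +
      ⟪z - xplus, β⁻¹ • (x - β • gradL x - xplus)⟫ - ε ^ 2 / (2 * β))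
    (hmaj : L xplus ≤ L x + ⟪xplus - x, gradL x⟫ + ‖xplus - x‖ ^ 2 / (2 * β)) :
    f xplus ≤ f x - (1 / (2 * β)) * (‖xplus - x‖ ^ 2 - ε ^ 2) ∧
      (ε ^ 2 ≤ ‖xplus - x‖ ^ 2 → f xplus ≤ f x) := by
  have h := hprox x
  have hv : x - β • gradL x - xplus = (x - xplus) - β • gradL x := by abel
  rw [hv, inner_smul_right, inner_sub_right, real_inner_smul_right,
    real_inner_self_eq_norm_sq] at h
  have hflip : ⟪xplus - x, gradL x⟫ = -⟪x - xplus, gradL x⟫ := by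
    rw [← inner_neg_left]; congr 1; abel
  have hnorm : ‖xplus - x‖ = ‖x - xplus‖ := norm_sub_rev _ _
  have key : f xplus ≤ f x - (1 / (2 * β)) * (‖xplus - x‖ ^ 2 - ε ^ 2) := by
    rw [hf, hf]
    rw [hflip] at hmaj
    rw [hnorm] at hmaj ⊢
    have hβ' : β ≠ 0 := ne_of_gt hβ
    have h2β : (2 : ℝ) * β ≠ 0 := by positivity
    have hinv : β⁻¹ * (‖x - xplus‖ ^ 2 - β * ⟪x - xplus, gradL x⟫)
        = ‖x - xplus‖ ^ 2 / β - ⟪x - xplus, gradL x⟫ := by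
      field_simp
    rw [hinv] at h
    have e1 : ‖x - xplus‖ ^ 2 / β = 2 * ((1 / (2 * β)) * ‖x - xplus‖ ^ 2) := by
      field_simp
    have e2 : ε ^ 2 / (2 * β) = (1 / (2 * β)) * ε ^ 2 := by ring
    have e3 : ‖x - xplus‖ ^ 2 / (2 * β) = (1 / (2 * β)) * ‖x - xplus‖ ^ 2 := by ring
    have e4 : (1 / (2 * β)) * (‖x - xplus‖ ^ 2 - ε ^ 2)
        = (1 / (2 * β)) * ‖x - xplus‖ ^ 2 - (1 / (2 * β)) * ε ^ 2 := by ring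
    rw [e1, e2] at h
    rw [e3] at hmaj
    rw [e4]
    linarith
  refine ⟨key, fun hle => ?_⟩
  have : 0 ≤ (1 / (2 * β)) * (‖xplus - x‖ ^ 2 - ε ^ 2) := by
    apply mul_nonneg (by positivity); linarith
  linarith
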